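/- Let m ≥ 1 be an integer and V₁, …, V_m > 0 real numbers, and for each i = 1, …, m let c^{(i)} : ℕ → ℝ be a sequence with lim_{k→∞} c^{(i)}_k/√k = 2√(V_i). Define c : ℕ → ℝ by c_k = max{ Σ_{i=1}^m c^{(i)}_{k_i} : k₁, …, k_m ∈ ℕ, k₁ + ⋯ + k_m = k }. Then lim_{k→∞} c_k/√k = 2√(V₁ + ⋯ + V_m). -/

import Mathlib

open Filter Finset

lemma cs_aux {m : ℕ} (a b : Fin m → ℝ) (ha : ∀ i, 0 ≤ a i) (hb : ∀ i, 0 ≤ b i) :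
    ∑ i, a i * Real.sqrt (b i) ≤ Real.sqrt (∑ i, (a i)^2) * Real.sqrt (∑ i, b i) := by
  have h := Finset.sum_mul_sq_le_sq_mul_sq Finset.univ a (fun i => Real.sqrt (b i))
  have h2 : (∑ i, (Real.sqrt (b i))^2) = ∑ i, b i :=
    Finset.sum_congr rfl fun i _ => Real.sq_sqrt (hb i)
  rw [h2] at h
  have hL : 0 ≤ ∑ i, a i * Real.sqrt (b i) :=
    Finset.sum_nonneg fun i _ => mul_nonneg (ha i) (Real.sqrt_nonneg _)
  calc ∑ i, a i * Real.sqrt (b i)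
      = Real.sqrt ((∑ i, a i * Real.sqrt (b i))^2) := (Real.sqrt_sq hL).symm
    _ ≤ Real.sqrt ((∑ i, (a i)^2) * ∑ i, b i) := Real.sqrt_le_sqrt h
    _ = Real.sqrt (∑ i, (a i)^2) * Real.sqrt (∑ i, b i) := Real.sqrt_mul (by positivity) _

lemma upper_aux (f : ℕ → ℝ) (L : ℝ)
    (hf : Tendsto (fun k : ℕ => f k / Real.sqrt k) atTop (nhds L)) (η : ℝ) (hη : 0 < η)
    (hLη : 0 ≤ L + η) :
    ∃ C : ℝ, 0 ≤ C ∧ ∀ k : ℕ, f k ≤ (L + η) * Real.sqrt k + C := by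
  have hev : ∀ᶠ k : ℕ in atTop, f k / Real.sqrt k < L + η :=
    hf.eventually (eventually_lt_nhds (by linarith))
  obtain ⟨N, hN⟩ := eventually_atTop.1 hev
  refine ⟨∑ j ∈ Finset.range (N + 1), |f j|, Finset.sum_nonneg fun j _ => abs_nonneg _, fun k => ?_⟩
  rcases le_or_gt k N with hk | hk
  · have h1 : f k ≤ ∑ j ∈ Finset.range (N + 1), |f j| := by
      calc f k ≤ |f k| := le_abs_self _
        _ ≤ _ := Finset.single_le_sum (f := fun j => |f j|) (fun j _ => abs_nonneg _)
            (Finset.mem_range.2 (by omega))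
    have h2 : 0 ≤ (L + η) * Real.sqrt k := by positivity
    linarith
  · have hk1 : 1 ≤ k := by omega
    have hsq : 0 < Real.sqrt k := Real.sqrt_pos.2 (by exact_mod_cast hk1)
    have := hN k (by omega)
    have h3 : f k ≤ (L + η) * Real.sqrt k := by
      rw [div_lt_iff₀ hsq] at this; linarith
    have h4 : 0 ≤ ∑ j ∈ Finset.range (N + 1), |f j| :=
      Finset.sum_nonneg fun j _ => abs_nonneg _
    linarith

lemma sqrt_atTop' : Filter.Tendsto Real.sqrt Filter.atTop Filter.atTop :=
  (tendsto_rpow_atTop (by norm_num : (0:ℝ) < 1/2)).congr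
    (fun x => (Real.sqrt_eq_rpow x).symm)

lemma floor_ratio_aux {T : ℝ} (hT : 0 < T) (W : ℝ) (hW : 0 < W) :
    Tendsto (fun k : ℕ => (⌊(k : ℝ) * W / T⌋₊ : ℝ) / k) atTop (nhds (W / T)) := by
  have hlow : Tendsto (fun k : ℕ => W / T - 1 / (k : ℝ)) atTop (nhds (W / T)) := by
    have := tendsto_one_div_atTop_nhds_zero_nat (𝕜 := ℝ)
    simpa using tendsto_const_nhds.sub this
  refine tendsto_of_tendsto_of_tendsto_of_le_of_le' hlow tendsto_const_nhds ?_ ?_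
  · filter_upwards [eventually_ge_atTop 1] with k hk
    have hk0 : (0 : ℝ) < k := by exact_mod_cast hk
    have h1 : (k : ℝ) * W / T - 1 ≤ (⌊(k : ℝ) * W / T⌋₊ : ℝ) :=
      le_of_lt (Nat.sub_one_lt_floor _)
    have h2 : ((k : ℝ) * W / T - 1) / k ≤ (⌊(k : ℝ) * W / T⌋₊ : ℝ) / k := by
      gcongr
    have h3 : ((k : ℝ) * W / T - 1) / k = W / T - 1 / k := by
      field_simp
    linarith
  · filter_upwards [eventually_ge_atTop 1] with k hk
    have hk0 : (0 : ℝ) < k := by exact_mod_cast hk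
    have h1 : (⌊(k : ℝ) * W / T⌋₊ : ℝ) ≤ (k : ℝ) * W / T := Nat.floor_le (by positivity)
    calc (⌊(k : ℝ) * W / T⌋₊ : ℝ) / k ≤ ((k : ℝ) * W / T) / k := by gcongr
      _ = W / T := by field_simp
theorem stmt_6 (m : ℕ) (hm : 1 ≤ m) (V : Fin m → ℝ) (hV : ∀ i, 0 < V i)
    (cs : Fin m → ℕ → ℝ)
    (hcs : ∀ i, Tendsto (fun k : ℕ => cs i k / Real.sqrt k) atTop
        (nhds (2 * Real.sqrt (V i))))
    (c : ℕ → ℝ)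
    (hc : ∀ k : ℕ, c k = sSup {S : ℝ | ∃ ks : Fin m → ℕ, (∑ i, ks i) = k ∧
        S = ∑ i, cs i (ks i)}) :
    Tendsto (fun k : ℕ => c k / Real.sqrt k) atTop
      (nhds (2 * Real.sqrt (∑ i, V i))) := by
  classical
  set T := ∑ i, V i with hTdef
  have i0 : Fin m := ⟨0, by omega⟩
  have hT : 0 < T := Finset.sum_pos (fun i _ => hV i) ⟨i0, Finset.mem_univ _⟩
  -- uniform upper bounds
  have hub : ∀ η : ℝ, 0 < η → ∃ C : ℝ, 0 ≤ C ∧ ∀ (k : ℕ) (ks : Fin m → ℕ), (∑ i, ks i) = k →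
      ∑ i, cs i (ks i) ≤ Real.sqrt (∑ i, (2 * Real.sqrt (V i) + η)^2) * Real.sqrt k + C := by
    intro η hη
    choose C hC0 hC using fun i => upper_aux (cs i) _ (hcs i) η hη (by positivity)
    refine ⟨∑ i, C i, Finset.sum_nonneg fun i _ => hC0 i, fun k ks hks => ?_⟩
    have hcast : (∑ i, ((ks i : ℝ))) = (k : ℝ) := by exact_mod_cast congrArg Nat.cast hks
    calc ∑ i, cs i (ks i) ≤ ∑ i, ((2 * Real.sqrt (V i) + η) * Real.sqrt (ks i) + C i) :=
          Finset.sum_le_sum fun i _ => hC i (ks i)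
      _ = (∑ i, (2 * Real.sqrt (V i) + η) * Real.sqrt (ks i)) + ∑ i, C i :=
          Finset.sum_add_distrib
      _ ≤ Real.sqrt (∑ i, (2 * Real.sqrt (V i) + η)^2) * Real.sqrt (∑ i, ((ks i : ℝ))) +
            ∑ i, C i := by
          have := cs_aux (m := m) (fun i => 2 * Real.sqrt (V i) + η) (fun i => ((ks i : ℝ)))
            (fun i => by positivity) (fun i => by positivity)
          linarith
      _ = _ := by rw [hcast]
  -- nonemptiness and boundedness of the sets
  have Sne : ∀ k : ℕ, Set.Nonempty {S : ℝ | ∃ ks : Fin m → ℕ, (∑ i, ks i) = k ∧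
      S = ∑ i, cs i (ks i)} := by
    intro k
    refine ⟨_, ⟨Pi.single i0 k, ?_, rfl⟩⟩
    rw [Finset.sum_pi_single']
    simp
  obtain ⟨C₁, hC₁0, hC₁⟩ := hub 1 one_pos
  have Sbdd : ∀ k : ℕ, BddAbove {S : ℝ | ∃ ks : Fin m → ℕ, (∑ i, ks i) = k ∧
      S = ∑ i, cs i (ks i)} := by
    intro k
    refine ⟨Real.sqrt (∑ i, (2 * Real.sqrt (V i) + 1)^2) * Real.sqrt k + C₁, ?_⟩
    rintro S ⟨ks, h1, rfl⟩
    exact hC₁ k ks h1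
  have hcle : ∀ (k : ℕ) (ks : Fin m → ℕ), (∑ i, ks i) = k → ∑ i, cs i (ks i) ≤ c k := by
    intro k ks hks
    rw [hc k]
    exact le_csSup (Sbdd k) ⟨ks, hks, rfl⟩
  have hcub : ∀ η : ℝ, 0 < η → ∃ C : ℝ, 0 ≤ C ∧ ∀ k : ℕ,
      c k ≤ Real.sqrt (∑ i, (2 * Real.sqrt (V i) + η)^2) * Real.sqrt k + C := by
    intro η hη
    obtain ⟨C, hC0, hC⟩ := hub η hη
    refine ⟨C, hC0, fun k => ?_⟩
    rw [hc k]
    refine csSup_le (Sne k) ?_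
    rintro S ⟨ks, h1, rfl⟩
    exact hC k ks h1
  rw [tendsto_order]
  constructor
  · -- lower bound via explicit partition
    intro b hb
    set Sf : ℕ → ℕ := fun k => ∑ j ∈ Finset.univ.erase i0, ⌊(k : ℝ) * V j / T⌋₊ with hSdef
    have hSk : ∀ k, Sf k ≤ k := by
      intro k
      have hreal : (Sf k : ℝ) ≤ k := by
        have h1 : (Sf k : ℝ) = ∑ j ∈ Finset.univ.erase i0, (⌊(k : ℝ) * V j / T⌋₊ : ℝ) := by
          rw [hSdef]; push_cast; ring
        rw [h1]
        calc ∑ j ∈ Finset.univ.erase i0, (⌊(k : ℝ) * V j / T⌋₊ : ℝ)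
            ≤ ∑ j ∈ Finset.univ.erase i0, (k : ℝ) * V j / T :=
              Finset.sum_le_sum fun j _ => Nat.floor_le
                (div_nonneg (mul_nonneg (Nat.cast_nonneg k) (hV j).le) hT.le)
          _ = (k : ℝ) * (∑ j ∈ Finset.univ.erase i0, V j) / T := by
              rw [Finset.mul_sum, Finset.sum_div]
          _ ≤ (k : ℝ) * T / T := by
              gcongr
              calc ∑ j ∈ Finset.univ.erase i0, V j ≤ ∑ j, V j :=
                    Finset.sum_le_sum_of_subset_of_nonneg (Finset.erase_subset _ _)
                      (fun j _ _ => (hV j).le)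
                _ = T := rfl
          _ = k := by field_simp
      exact_mod_cast hreal
    set ks : ℕ → Fin m → ℕ :=
      fun k i => if i = i0 then k - Sf k else ⌊(k : ℝ) * V i / T⌋₊ with hksdef
    have hsum : ∀ k, (∑ i, ks k i) = k := by
      intro k
      rw [← Finset.add_sum_erase _ _ (Finset.mem_univ i0)]
      have h2 : ∑ j ∈ Finset.univ.erase i0, ks k j = Sf k := by
        refine Finset.sum_congr rfl fun j hj => ?_
        simp only [hksdef]
        rw [if_neg (Finset.ne_of_mem_erase hj)]
      rw [h2]
      simp only [hksdef, if_pos, if_true]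
      exact Nat.sub_add_cancel (hSk k)
    have hratio : ∀ i, Tendsto (fun k : ℕ => (ks k i : ℝ) / k) atTop (nhds (V i / T)) := by
      intro i
      by_cases hi : i = i0
      · subst hi
        have hScast : ∀ k : ℕ, (ks k i : ℝ) = (k : ℝ) - Sf k := by
          intro k
          simp only [hksdef, if_pos, if_true]
          rw [Nat.cast_sub (hSk k)]
        have h1 : Tendsto (fun k : ℕ => (Sf k : ℝ) / k) atTop (nhds ((T - V i) / T)) := by
          have heq : (fun k : ℕ => (Sf k : ℝ) / k)
              = fun k : ℕ => ∑ j ∈ Finset.univ.erase i, (⌊(k : ℝ) * V j / T⌋₊ : ℝ) / k := by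
            funext k
            rw [hSdef]
            push_cast
            rw [Finset.sum_div]
          rw [heq]
          have hlim := tendsto_finset_sum (Finset.univ.erase i)
            (fun j (_ : j ∈ Finset.univ.erase i) => floor_ratio_aux hT (V j) (hV j))
          convert hlim using 2
          rw [← Finset.sum_div, Finset.sum_erase_eq_sub (Finset.mem_univ i)]
        have h2 : Tendsto (fun k : ℕ => 1 - (Sf k : ℝ) / k) atTop
            (nhds (1 - (T - V i) / T)) := tendsto_const_nhds.sub h1
        have h3 : (1 : ℝ) - (T - V i) / T = V i / T := by field_simp; ring
        rw [h3] at h2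
        refine Tendsto.congr' ?_ h2
        filter_upwards [eventually_ge_atTop 1] with k hk
        have hk0 : (k : ℝ) ≠ 0 := Nat.cast_ne_zero.2 (by omega)
        rw [hScast k, sub_div, div_self hk0]
      · have heq : (fun k : ℕ => (ks k i : ℝ) / k)
            = fun k : ℕ => (⌊(k : ℝ) * V i / T⌋₊ : ℝ) / k := by
          funext k
          simp only [hksdef]
          rw [if_neg hi]
        rw [heq]
        exact floor_ratio_aux hT (V i) (hV i)
    have htop : ∀ i, Tendsto (fun k : ℕ => ks k i) atTop atTop := by
      intro i
      rw [← tendsto_natCast_atTop_iff (R := ℝ)]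
      have h1 : Tendsto (fun k : ℕ => (k : ℝ) * ((ks k i : ℝ) / k)) atTop atTop :=
        Tendsto.atTop_mul_pos (div_pos (hV i) hT) tendsto_natCast_atTop_atTop (hratio i)
      refine Tendsto.congr' ?_ h1
      filter_upwards [eventually_ge_atTop 1] with k hk
      have hk0 : (k : ℝ) ≠ 0 := Nat.cast_ne_zero.2 (by omega)
      rw [mul_comm, div_mul_cancel₀ _ hk0]
    have hsT : Real.sqrt T ≠ 0 := (Real.sqrt_pos.2 hT).ne'
    have hterm : ∀ i, Tendsto (fun k : ℕ => cs i (ks k i) / Real.sqrt k) atTop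
        (nhds (2 * V i / Real.sqrt T)) := by
      intro i
      have h1 : Tendsto (fun k : ℕ => cs i (ks k i) / Real.sqrt (ks k i)) atTop
          (nhds (2 * Real.sqrt (V i))) := (hcs i).comp (htop i)
      have h2 : Tendsto (fun k : ℕ => Real.sqrt ((ks k i : ℝ) / k)) atTop
          (nhds (Real.sqrt (V i / T))) :=
        (Real.continuous_sqrt.tendsto _).comp (hratio i)
      have h3 := h1.mul h2
      have hv := Real.mul_self_sqrt (hV i).le
      have h4 : 2 * Real.sqrt (V i) * Real.sqrt (V i / T) = 2 * V i / Real.sqrt T := by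
        rw [Real.sqrt_div (hV i).le]
        field_simp
        nlinarith [hv]
      rw [h4] at h3
      refine Tendsto.congr' ?_ h3
      filter_upwards [(htop i).eventually (eventually_ge_atTop 1), eventually_ge_atTop 1]
        with k hk1 hk2
      have hks0 : (0 : ℝ) < Real.sqrt (ks k i) := Real.sqrt_pos.2 (by exact_mod_cast hk1)
      have hk0 : (0 : ℝ) < Real.sqrt k := Real.sqrt_pos.2 (by exact_mod_cast hk2)
      rw [Real.sqrt_div (by positivity : (0:ℝ) ≤ (ks k i : ℝ))]
      field_simp
    have hsumlim : Tendsto (fun k : ℕ => ∑ i, cs i (ks k i) / Real.sqrt k) atTop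
        (nhds (∑ i, 2 * V i / Real.sqrt T)) :=
      tendsto_finset_sum _ (fun i _ => hterm i)
    have hval : (∑ i, 2 * V i / Real.sqrt T) = 2 * Real.sqrt T := by
      rw [← Finset.sum_div, ← Finset.mul_sum, ← hTdef,
        div_eq_iff hsT, mul_assoc, Real.mul_self_sqrt hT.le]
    rw [hval] at hsumlim
    have hsumlim' : Tendsto (fun k : ℕ => (∑ i, cs i (ks k i)) / Real.sqrt k) atTop
        (nhds (2 * Real.sqrt T)) :=
      Tendsto.congr (fun k => (Finset.sum_div _ _ _).symm) hsumlim
    filter_upwards [hsumlim'.eventually (eventually_gt_nhds hb), eventually_ge_atTop 1]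
      with k h1 hk
    have hsq : 0 < Real.sqrt k := Real.sqrt_pos.2 (by exact_mod_cast hk)
    have hle := hcle k (ks k) (hsum k)
    calc b < (∑ i, cs i (ks k i)) / Real.sqrt k := h1
      _ ≤ c k / Real.sqrt k := by gcongr
  · -- upper bound
    intro b hb
    set ε := b - 2 * Real.sqrt T with hε
    have hε0 : 0 < ε := by simp [hε]; linarith
    have hgc : ContinuousAt (fun η : ℝ => Real.sqrt (∑ i, (2 * Real.sqrt (V i) + η)^2)) 0 := by
      apply Real.continuous_sqrt.continuousAt.comp
      fun_prop
    have hg0 : Real.sqrt (∑ i, (2 * Real.sqrt (V i) + (0:ℝ))^2) = 2 * Real.sqrt T := by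
      have h1 : (∑ i, (2 * Real.sqrt (V i) + (0:ℝ))^2) = 4 * T := by
        rw [hTdef, Finset.mul_sum]
        refine Finset.sum_congr rfl fun i _ => ?_
        rw [add_zero, mul_pow, Real.sq_sqrt (hV i).le]
        norm_num
      rw [h1, show (4:ℝ) * T = (2:ℝ)^2 * T by norm_num, Real.sqrt_mul (by positivity),
        Real.sqrt_sq (by norm_num)]
    obtain ⟨δ, hδ0, hδ⟩ := Metric.continuousAt_iff.1 hgc (ε/2) (by linarith)
    have hηδ : dist (δ/2) (0:ℝ) < δ := by
      rw [Real.dist_eq, sub_zero, abs_of_pos (by linarith)]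
      linarith
    have hgη := hδ hηδ
    rw [Real.dist_eq] at hgη
    have hgη' : Real.sqrt (∑ i, (2 * Real.sqrt (V i) + δ/2)^2) < 2 * Real.sqrt T + ε/2 := by
      have := abs_lt.1 hgη
      rw [hg0] at this
      linarith [this.2]
    obtain ⟨C, hC0, hC⟩ := hcub (δ/2) (by linarith)
    have hdiv : Tendsto (fun k : ℕ => C / Real.sqrt k) atTop (nhds 0) := by
      apply Tendsto.div_atTop tendsto_const_nhds
      exact sqrt_atTop'.comp tendsto_natCast_atTop_atTop
    filter_upwards [eventually_ge_atTop 1, hdiv.eventually (eventually_lt_nhds (show (0:ℝ) < ε/2 by linarith))] with k hk1 hk2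
    have hsq : 0 < Real.sqrt k := Real.sqrt_pos.2 (by exact_mod_cast hk1)
    have h1 : c k / Real.sqrt k ≤ Real.sqrt (∑ i, (2 * Real.sqrt (V i) + δ/2)^2) + C / Real.sqrt k := by
      rw [div_le_iff₀ hsq, add_mul, div_mul_cancel₀ _ hsq.ne']
      exact hC k
    calc c k / Real.sqrt k ≤ _ := h1
      _ < (2 * Real.sqrt T + ε/2) + ε/2 := by linarith
      _ = b := by rw [hε]; ring
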